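/- Let $T_n$ be the $n \times n$ real matrix with entries $(T_n)_{ij} = \mathbb{1}_{i\ge j} - \mathbb{1}_{i\le j}$ (so $+1$ below the diagonal, $-1$ above, $0$ on the diagonal). Then the characteristic polynomial of $T_n$ is $\det(\lambda I - T_n) = \frac{(\lambda+1)^n + (\lambda-1)^n}{2}$. -/

import Mathlib

open Polynomial Matrix Finset

lemma key_det (n : ℕ) (l : ℝ) (hl : l + 1 ≠ 0) :
    (Matrix.of (fun i j : Fin n =>
      (if i = j then l else 0) -
        ((if j ≤ i then (1 : ℝ) else 0) - (if i ≤ j then (1 : ℝ) else 0)))).det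
      = (1 / 2) * ((l + 1) ^ n + (l - 1) ^ n) := by
  set a : ℝ := l + 1 with ha
  set r : ℝ := (l - 1) / a with hr
  have hra : r * a = l - 1 := div_mul_cancel₀ _ hl
  have hr1 : r - 1 = -2 / a := by
    rw [hr]; field_simp; ring
  have hrne : r ≠ 1 := by
    intro h
    rw [h] at hra; simp at hra; linarith [hra]
  set B : Matrix (Fin n) (Fin n) ℝ :=
    Matrix.of (fun i j => if i = j then a else if i < j then 2 else 0) with hB
  set x : Fin n → ℝ := fun j => r ^ (n - 1 - (j : ℕ)) / a with hx
  -- B *ᵥ x = 1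
  have hBx : B *ᵥ x = (fun _ => 1) := by
    funext i
    have hin := i.isLt
    have hrow : ∀ j : Fin n, B i j * x j =
        (if j = i then a * x i else 0) + (if i < j then 2 * x j else 0) := by
      intro j
      rcases lt_trichotomy i j with h | h | h
      · simp [hB, h, h.ne', h.ne]
      · simp [hB, h]
      · simp [hB, h.ne', h.ne, not_lt.mpr h.le, (not_lt.mpr h.le : ¬ i < j)]
    have hsum : ∑ j ∈ Finset.Ioi i, x j
        = (1 / a) * ∑ k ∈ Finset.range (n - 1 - (i : ℕ)), r ^ k := by
      rw [Finset.mul_sum]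
      apply Finset.sum_nbij' (fun j : Fin n => n - 1 - (j : ℕ))
        (fun k => (⟨n - 1 - k, by omega⟩ : Fin n))
      · intro j hj
        simp only [Finset.mem_Ioi, Fin.lt_def] at hj
        have := j.isLt
        simp only [Finset.mem_range]; omega
      · intro k hk
        simp only [Finset.mem_range] at hk
        simp only [Finset.mem_Ioi, Fin.lt_def]; omega
      · intro j hj
        simp only [Finset.mem_Ioi, Fin.lt_def] at hj
        have := j.isLt
        exact Fin.ext (by simp; omega)
      · intro k hk
        simp only [Finset.mem_range] at hk
        simp; omega
      · intro j hj
        rw [hx]; ring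
    have hgeom : ∑ k ∈ Finset.range (n - 1 - (i : ℕ)), r ^ k
        = (r ^ (n - 1 - (i : ℕ)) - 1) / (r - 1) := geom_sum_eq hrne _
    simp only [Matrix.mulVec, dotProduct]
    rw [Finset.sum_congr rfl (fun j _ => hrow j)]
    rw [Finset.sum_add_distrib, Finset.sum_ite_eq' Finset.univ i (fun _ => a * x i)]
    have : (∑ j : Fin n, if i < j then 2 * x j else 0) = 2 * ∑ j ∈ Finset.Ioi i, x j := by
      rw [Finset.mul_sum]
      rw [← Finset.sum_filter]
      congr 1
      ext j; simp
    rw [if_pos (Finset.mem_univ i), this, hsum, hgeom, hr1, hx]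
    have h2 : r - 1 ≠ 0 := sub_ne_zero.mpr hrne
    field_simp
    ring
  -- A = B - col 1 * row 1
  have hA : (Matrix.of (fun i j : Fin n =>
      (if i = j then l else 0) -
        ((if j ≤ i then (1 : ℝ) else 0) - (if i ≤ j then (1 : ℝ) else 0))))
      = B - Matrix.replicateCol Unit (fun _ => (1:ℝ)) * Matrix.replicateRow Unit (fun _ => (1:ℝ)) := by
    ext i j
    rcases lt_trichotomy i j with h | h | h
    · simp [hB, Matrix.mul_apply, h, h.le, h.ne, h.ne', not_le.mpr h]; norm_num
    · simp [hB, Matrix.mul_apply, h, ha]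
    · simp [hB, Matrix.mul_apply, h, h.le, h.ne, h.ne', not_le.mpr h, not_lt.mpr h.le]
  have hcol : Matrix.replicateCol Unit (fun _ : Fin n => (1:ℝ)) * Matrix.replicateRow Unit (fun _ : Fin n => (1:ℝ))
      = B * (Matrix.replicateCol Unit x * Matrix.replicateRow Unit (fun _ : Fin n => (1:ℝ))) := by
    rw [← Matrix.mul_assoc, ← Matrix.replicateCol_mulVec, hBx]
  have hdetB : B.det = a ^ n := by
    rw [Matrix.det_of_upperTriangular]
    · simp [hB]
    · intro i j hij
      simp only [id] at hij
      simp [hB, hij.ne', not_lt.mpr hij.le]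
  have hsumx : (fun _ : Fin n => (1:ℝ)) ⬝ᵥ x = (1 - r ^ n) / 2 := by
    simp only [dotProduct, one_mul]
    have : ∑ j : Fin n, x j = (1/a) * ∑ k ∈ Finset.range n, r ^ k := by
      rw [Finset.mul_sum, hx]
      rw [Fin.sum_univ_eq_sum_range (fun j => r ^ (n - 1 - j) / a)]
      rw [← Finset.sum_range_reflect]
      apply Finset.sum_congr rfl
      intro k hk
      simp only [Finset.mem_range] at hk
      rw [show n - 1 - (n - 1 - k) = k by omega]
      ring
    rw [this, geom_sum_eq hrne, hr1]
    have h2 : r - 1 ≠ 0 := sub_ne_zero.mpr hrne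
    field_simp
    ring
  have hcolneg : Matrix.replicateCol Unit (-x) = -Matrix.replicateCol Unit x := by ext; simp
  have hfinal : (Matrix.of (fun i j : Fin n =>
      (if i = j then l else 0) -
        ((if j ≤ i then (1 : ℝ) else 0) - (if i ≤ j then (1 : ℝ) else 0)))).det
      = B.det * (1 + (fun _ : Fin n => (1:ℝ)) ⬝ᵥ (-x)) := by
    rw [hA, hcol]
    nth_rewrite 1 [show B = B * 1 from (Matrix.mul_one B).symm]
    rw [← Matrix.mul_sub, Matrix.det_mul]
    congr 1
    rw [sub_eq_add_neg, ← Matrix.neg_mul, ← hcolneg]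
    exact Matrix.det_one_add_replicateCol_mul_replicateRow _ _
  rw [hfinal, hdetB, dotProduct_neg, hsumx]
  have hpow : a ^ n * r ^ n = (l - 1) ^ n := by rw [← mul_pow, mul_comm, hra]
  rw [← hpow]
  ring

theorem stmt_2 (n : ℕ) :
    (Matrix.of (fun i j : Fin n =>
        (if j ≤ i then (1 : ℝ) else 0) - (if i ≤ j then (1 : ℝ) else 0))).charpoly
      = C (1 / 2 : ℝ) * ((X + 1) ^ n + (X - 1) ^ n) := by
  apply Polynomial.eq_of_infinite_eval_eq
  apply Set.Infinite.mono (s := {x : ℝ | x ≠ -1})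
  · intro l (hl : l ≠ -1)
    have hl' : l + 1 ≠ 0 := fun h => hl (by linarith)
    have := key_det n l hl'
    simp only [Set.mem_setOf_eq]
    rw [Matrix.charpoly, ← Polynomial.coe_evalRingHom, RingHom.map_det]
    have hmap : (Matrix.charmatrix (Matrix.of (fun i j : Fin n =>
        (if j ≤ i then (1 : ℝ) else 0) - (if i ≤ j then (1 : ℝ) else 0)))).map
          (Polynomial.evalRingHom l)
        = Matrix.of (fun i j : Fin n =>
          (if i = j then l else 0) -
            ((if j ≤ i then (1 : ℝ) else 0) - (if i ≤ j then (1 : ℝ) else 0))) := by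
      ext i j
      simp only [Matrix.map_apply, Matrix.charmatrix_apply, Matrix.of_apply,
        Matrix.one_apply, Matrix.diagonal_apply]
      by_cases h : i = j <;> simp [h, apply_ite (Polynomial.eval l)]
    rw [RingHom.mapMatrix_apply, hmap, this]
    simp
  · apply Set.Infinite.mono (s := Set.Ioi (-1 : ℝ))
    · intro x hx
      exact ne_of_gt hx
    · exact Set.Ioi_infinite _
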